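/- Let A ⊆ ℝ^n be a nonempty finite set and C = conv A. Then the end set es(C) equals ⋃_{A' ∈ 𝒜} conv A', where 𝒜 := {argmax_{a ∈ A} ⟨a, w⟩ | w ∈ ℝ^n, max_{a ∈ A} ⟨a, w⟩ > 0}. -/

import Mathlib

open Set Metric Filter Topology Finset
open scoped RealInnerProductSpace

variable {n : ℕ}
local notation "E" => EuclideanSpace ℝ (Fin n)

/-- membership in convex hull keeps linear inequalities -/
lemma inner_le_of_mem_convexHull {A : Set E} {w x : E} {c : ℝ}
    (hx : x ∈ convexHull ℝ A) (h : ∀ a ∈ A, ⟪w, a⟫ ≤ c) : ⟪w, x⟫ ≤ c := by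
  have hconv : Convex ℝ {y : E | ⟪w, y⟫ ≤ c} := by
    intro y hy z hz a b ha hb hab
    simp only [Set.mem_setOf_eq] at hy hz ⊢
    calc ⟪w, a • y + b • z⟫ = a * ⟪w, y⟫ + b * ⟪w, z⟫ := by
            rw [inner_add_right, real_inner_smul_right, real_inner_smul_right]
      _ ≤ a * c + b * c :=
          add_le_add (mul_le_mul_of_nonneg_left hy ha) (mul_le_mul_of_nonneg_left hz hb)
      _ = c := by rw [← add_mul, hab, one_mul]
  exact convexHull_min h hconv hx

lemma support_concentration (s : Finset E) (w x : E)
    (hx : x ∈ convexHull ℝ (s : Set E)) (hmax : ∀ a ∈ s, ⟪w, a⟫ ≤ ⟪w, x⟫) :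
    x ∈ convexHull ℝ {a ∈ (s : Set E) | ⟪w, a⟫ = ⟪w, x⟫} := by
  classical
  rw [Finset.convexHull_eq] at hx
  obtain ⟨l, h0, h1, hc⟩ := hx
  have hxe : ∑ a ∈ s, l a • a = x := by
    rw [Finset.centerMass, h1] at hc; simpa using hc
  have hinner : ∑ a ∈ s, l a * ⟪w, a⟫ = ⟪w, x⟫ := by
    rw [← hxe, inner_sum]
    exact Finset.sum_congr rfl fun a _ => (real_inner_smul_right _ _ _).symm
  have hzero : ∀ a ∈ s, l a * (⟪w, x⟫ - ⟪w, a⟫) = 0 := by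
    rw [← Finset.sum_eq_zero_iff_of_nonneg]
    · have : ∑ a ∈ s, l a * (⟪w, x⟫ - ⟪w, a⟫)
          = (∑ a ∈ s, l a) * ⟪w, x⟫ - ∑ a ∈ s, l a * ⟪w, a⟫ := by
        rw [Finset.sum_mul, ← Finset.sum_sub_distrib]
        exact Finset.sum_congr rfl fun a _ => by ring
      rw [this, h1, hinner]; ring
    · intro a ha
      exact mul_nonneg (h0 a ha) (by linarith [hmax a ha])
  set t := s.filter (fun a => ⟪w, a⟫ = ⟪w, x⟫) with ht
  have hvanish : ∀ a ∈ s, a ∉ t → l a = 0 := by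
    intro a ha hat
    rcases mul_eq_zero.1 (hzero a ha) with h | h
    · exact h
    · exact absurd (Finset.mem_filter.2 ⟨ha, by linarith⟩) hat
  have hts : t ⊆ s := Finset.filter_subset _ _
  have hsum1 : ∑ a ∈ t, l a = 1 := by
    rw [Finset.sum_subset hts hvanish, h1]
  have hsumx : ∑ a ∈ t, l a • a = x := by
    rw [Finset.sum_subset hts (fun a ha hat => by rw [hvanish a ha hat, zero_smul]), hxe]
  have hmem : t.centerMass l id ∈ convexHull ℝ {a ∈ (s : Set E) | ⟪w, a⟫ = ⟪w, x⟫} := by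
    refine Finset.centerMass_mem_convexHull t (fun a ha => h0 a (hts ha)) (by rw [hsum1]; norm_num) ?_
    intro a ha
    have := Finset.mem_filter.1 ha
    exact ⟨this.1, this.2⟩
  rw [Finset.centerMass, hsum1, inv_one, one_smul] at hmem
  simp only [id_eq] at hmem
  rwa [hsumx] at hmem

lemma key_lemma (s : Finset E) : ∀ x : E,
    x ∈ convexHull ℝ (s : Set E) → (∀ t : ℝ, 1 < t → t • x ∉ convexHull ℝ (s : Set E)) →
    ∃ w : E, (∀ a ∈ s, ⟪w, a⟫ ≤ ⟪w, x⟫) ∧ 0 < ⟪w, x⟫ := by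
  classical
  induction s using Finset.strongInductionOn with
  | _ s ih =>
  intro x hx h
  set V : Submodule ℝ E := Submodule.span ℝ (insert x (s : Set E)) with hV
  have hxV : x ∈ V := Submodule.subset_span (Set.mem_insert _ _)
  have hsV : ∀ a ∈ s, a ∈ V := fun a ha => Submodule.subset_span (Set.mem_insert_of_mem _ ha)
  have hsep : ∀ k : ℕ, ∃ w : E, w ∈ V ∧ ‖w‖ = 1 ∧ 0 < ⟪w, x⟫ ∧
      ∀ a ∈ s, ⟪w, a⟫ < (1 + ((k : ℝ) + 1)⁻¹) * ⟪w, x⟫ := by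
    intro k
    set t : ℝ := 1 + ((k : ℝ) + 1)⁻¹ with htdef
    have htpos : (0:ℝ) < ((k : ℝ) + 1)⁻¹ := by positivity
    have ht1 : 1 < t := by rw [htdef]; linarith
    obtain ⟨f, u, hfu, hux⟩ := geometric_hahn_banach_closed_point
      (convex_convexHull ℝ _) ((Set.Finite.isCompact_convexHull (𝕜 := ℝ) s.finite_toSet).isClosed)
      (h t ht1)
    set v : E := (InnerProductSpace.toDual ℝ _).symm f with hv
    have hvy : ∀ y : E, ⟪v, y⟫ = f y := fun y => InnerProductSpace.toDual_symm_apply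
    set p : E := (V.orthogonalProjectionOnto v : E) with hp
    have hpy : ∀ y ∈ V, ⟪p, y⟫ = ⟪v, y⟫ := by
      intro y hy
      have h0 : ⟪v - p, y⟫ = 0 := V.starProjection_inner_eq_zero v y hy
      rw [inner_sub_left] at h0
      linarith
    have hfx : 0 < f x := by
      have h1 : f x < u := hfu x hx
      have h2 : u < f (t • x) := hux
      rw [map_smul, smul_eq_mul] at h2
      nlinarith
    have hpx : ⟪p, x⟫ = f x := by rw [hpy x hxV, hvy]
    have hp0 : p ≠ 0 := by
      intro h0
      rw [h0, inner_zero_left] at hpx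
      linarith
    have hnp : (0:ℝ) < ‖p‖⁻¹ := inv_pos.2 (norm_pos_iff.2 hp0)
    refine ⟨‖p‖⁻¹ • p, Submodule.smul_mem V _ ((V.orthogonalProjectionOnto v).2), ?_, ?_, ?_⟩
    · rw [norm_smul, norm_inv, norm_norm, inv_mul_cancel₀ (norm_ne_zero_iff.2 hp0)]
    · rw [real_inner_smul_left, hpx]
      exact mul_pos hnp hfx
    · intro a ha
      have h1 : f a < u := hfu a (subset_convexHull ℝ _ ha)
      have h2 : u < f (t • x) := hux
      rw [map_smul, smul_eq_mul] at h2
      have hpa : ⟪p, a⟫ = f a := by rw [hpy a (hsV a ha), hvy]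
      rw [real_inner_smul_left, real_inner_smul_left, hpa, hpx]
      have : f a < t * f x := lt_trans h1 h2
      calc ‖p‖⁻¹ * f a < ‖p‖⁻¹ * (t * f x) := by
            exact mul_lt_mul_of_pos_left this hnp
        _ = t * (‖p‖⁻¹ * f x) := by ring
  choose w hwV hw1 hwx hwa using hsep
  have hVclosed : IsClosed (V : Set E) := Submodule.closed_of_finiteDimensional V
  have hK : IsCompact ((V : Set E) ∩ sphere (0:E) 1) :=
    (isCompact_sphere (0:E) 1).inter_left hVclosed
  obtain ⟨z, hzK, φ, hφ, hconv⟩ := hK.tendsto_subseq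
    (fun k => ⟨hwV k, by simp [mem_sphere_zero_iff_norm, hw1 k]⟩)
  have hzV : z ∈ V := hzK.1
  have hz1 : ‖z‖ = 1 := mem_sphere_zero_iff_norm.1 hzK.2
  have hinner_tendsto : ∀ y : E, Tendsto (fun k => ⟪w (φ k), y⟫) atTop (𝓝 ⟪z, y⟫) := by
    intro y
    have hc : Continuous fun v : E => ⟪v, y⟫ := continuous_id.inner continuous_const
    exact (hc.tendsto z).comp hconv
  have hφat : Tendsto (fun k => ((φ k : ℝ) + 1)⁻¹) atTop (𝓝 0) :=
    tendsto_inv_atTop_zero.comp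
      (tendsto_atTop_add_const_right _ 1 (tendsto_natCast_atTop_atTop.comp hφ.tendsto_atTop))
  have ht_tendsto : Tendsto (fun k => 1 + ((φ k : ℝ) + 1)⁻¹) atTop (𝓝 1) := by
    have := tendsto_const_nhds.add hφat (f := fun _ : ℕ => (1:ℝ))
    simpa using this
  have hzx : 0 ≤ ⟪z, x⟫ :=
    le_of_tendsto_of_tendsto' tendsto_const_nhds (hinner_tendsto x)
      (fun k => (hwx (φ k)).le)
  have hza : ∀ a ∈ s, ⟪z, a⟫ ≤ ⟪z, x⟫ := by
    intro a ha
    have hrhs : Tendsto (fun k => (1 + ((φ k : ℝ) + 1)⁻¹) * ⟪w (φ k), x⟫) atTop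
        (𝓝 (1 * ⟪z, x⟫)) := ht_tendsto.mul (hinner_tendsto x)
    rw [one_mul] at hrhs
    exact le_of_tendsto_of_tendsto' (hinner_tendsto a) hrhs
      (fun k => (hwa (φ k) a ha).le)
  rcases hzx.lt_or_eq with hpos | h0
  · exact ⟨z, hza, hpos⟩
  · -- degenerate case: recurse on the zero-face
    have h0' : ⟪z, x⟫ = 0 := h0.symm
    set s' : Finset E := s.filter (fun a => ⟪z, a⟫ = 0) with hs'
    have hss : s' ⊆ s := Finset.filter_subset _ _
    have hproper : s' ≠ s := by
      intro heq
      have hallz : ∀ y ∈ insert x (s : Set E), y ∈ LinearMap.ker ((innerSL ℝ z).toLinearMap) := by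
        intro y hy
        rcases hy with rfl | hy
        · simpa using h0'
        · have : y ∈ s' := heq ▸ hy
          have := (Finset.mem_filter.1 this).2
          simpa using this
      have hle : V ≤ LinearMap.ker ((innerSL ℝ z).toLinearMap) :=
        Submodule.span_le.2 hallz
      have : ⟪z, z⟫ = (0:ℝ) := hle hzV
      rw [real_inner_self_eq_norm_sq, hz1] at this
      norm_num at this
    have hxs' : x ∈ convexHull ℝ (s' : Set E) := by
      have hcon := support_concentration s z x hx hza
      have hset : {a ∈ (s : Set E) | ⟪z, a⟫ = ⟪z, x⟫} = (s' : Set E) := by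
        ext a
        simp [hs', h0']
      rwa [hset] at hcon
    have h' : ∀ t : ℝ, 1 < t → t • x ∉ convexHull ℝ (s' : Set E) := fun t ht htx =>
      h t ht (convexHull_mono (Finset.coe_subset.2 hss) htx)
    obtain ⟨w', hw'a, hw'x⟩ := ih s' (hss.ssubset_of_ne hproper) x hxs' h'
    -- combine w' with z to control all of s
    obtain ⟨c0, hc0⟩ := Finset.exists_le
      (s.image (fun a => (⟪w', a⟫ - ⟪w', x⟫) / (-⟪z, a⟫)))
    set c : ℝ := max c0 0 with hcdef
    have hc0c : c0 ≤ c := le_max_left _ _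
    have hcnn : (0:ℝ) ≤ c := le_max_right _ _
    refine ⟨w' + c • z, ?_, ?_⟩
    · intro a ha
      rw [inner_add_left, inner_add_left, real_inner_smul_left, real_inner_smul_left, h0',
        mul_zero]
      by_cases hz0 : ⟪z, a⟫ = 0
      · rw [hz0, mul_zero]
        simpa using hw'a a (Finset.mem_filter.2 ⟨ha, hz0⟩)
      · have hzneg : ⟪z, a⟫ < 0 := lt_of_le_of_ne (by
          have := hza a ha; rw [h0'] at this; exact this) hz0
        have hbound : (⟪w', a⟫ - ⟪w', x⟫) / (-⟪z, a⟫) ≤ c :=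
          le_trans (hc0 _ (Finset.mem_image_of_mem _ ha)) hc0c
        rw [div_le_iff₀ (by linarith)] at hbound
        nlinarith
    · rw [inner_add_left, real_inner_smul_left, h0', mul_zero, add_zero]
      exact hw'x
/-- For a finite set A with C = conv A, the end set of C is the union of the
convex hulls of the argmax subsets of A over directions with positive max value. -/
theorem end_set_convexHull_finite {n : ℕ} (A : Set (EuclideanSpace ℝ (Fin n)))
    (hfin : A.Finite) (hne : A.Nonempty) :
    {x ∈ convexHull ℝ A | ∀ t : ℝ, 1 < t → t • x ∉ convexHull ℝ A} =
      ⋃ w ∈ {w : EuclideanSpace ℝ (Fin n) | 0 < sSup ((fun a => ⟪a, w⟫) '' A)},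
        convexHull ℝ {a ∈ A | ∀ b ∈ A, ⟪b, w⟫ ≤ ⟪a, w⟫} := by
  classical
  ext x
  simp only [Set.mem_setOf_eq, Set.mem_iUnion, exists_prop]
  constructor
  · rintro ⟨hx, h⟩
    have hcs : (hfin.toFinset : Set (EuclideanSpace ℝ (Fin n))) = A := hfin.coe_toFinset
    obtain ⟨w, hwa, hwx⟩ := key_lemma hfin.toFinset x (by rwa [hcs]) (by rw [hcs]; exact h)
    have hwa' : ∀ a ∈ A, ⟪w, a⟫ ≤ ⟪w, x⟫ := fun a ha =>
      hwa a (hfin.mem_toFinset.2 ha)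
    refine ⟨w, ?_, ?_⟩
    · -- 0 < sSup
      have hbdd : BddAbove ((fun a => ⟪a, w⟫) '' A) := (hfin.image _).bddAbove
      have hxle : ⟪w, x⟫ ≤ sSup ((fun a => ⟪a, w⟫) '' A) :=
        inner_le_of_mem_convexHull hx (fun a ha => by
          rw [real_inner_comm]
          exact le_csSup hbdd ⟨a, ha, rfl⟩)
      linarith
    · -- x in conv of argmax set
      have hcon := support_concentration hfin.toFinset w x (by rwa [hcs]) hwa
      refine convexHull_mono ?_ hcon
      rintro a ⟨ha, hae⟩
      rw [hcs] at ha
      refine ⟨ha, fun b hb => ?_⟩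
      calc ⟪b, w⟫ = ⟪w, b⟫ := real_inner_comm _ _
        _ ≤ ⟪w, x⟫ := hwa' b hb
        _ = ⟪w, a⟫ := hae.symm
        _ = ⟪a, w⟫ := real_inner_comm _ _
  · rintro ⟨w, hw, hxS⟩
    set M := sSup ((fun a => ⟪a, w⟫) '' A) with hM
    have hub : ∀ b ∈ A, ⟪b, w⟫ ≤ M := fun b hb =>
      le_csSup (hfin.image _).bddAbove ⟨b, hb, rfl⟩
    obtain ⟨a0, ha0A, ha0⟩ := Set.Nonempty.csSup_mem (hne.image (fun a => ⟪a, w⟫)) (hfin.image (fun a => ⟪a, w⟫))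
    have hSsub : {a ∈ A | ∀ b ∈ A, ⟪b, w⟫ ≤ ⟪a, w⟫} ⊆ A := Set.sep_subset _ _
    have hSM : ∀ a ∈ {a ∈ A | ∀ b ∈ A, ⟪b, w⟫ ≤ ⟪a, w⟫}, ⟪a, w⟫ = M := by
      rintro a ⟨haA, hamax⟩
      have h1 : ⟪a, w⟫ ≤ M := hub a haA
      have ha0' : ⟪a0, w⟫ = M := ha0
      have h2 : M ≤ ⟪a, w⟫ := by rw [← ha0']; exact hamax a0 ha0A
      linarith
    have hxA : x ∈ convexHull ℝ A := convexHull_mono hSsub hxS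
    have hxM : ⟪w, x⟫ = M := by
      have hle : ⟪w, x⟫ ≤ M := inner_le_of_mem_convexHull hxS (fun a ha => by
        rw [real_inner_comm]; exact (hSM a ha).le)
      have hge : ⟪-w, x⟫ ≤ -M := inner_le_of_mem_convexHull hxS (fun a ha => by
        rw [inner_neg_left, real_inner_comm]; linarith [hSM a ha])
      rw [inner_neg_left] at hge
      linarith
    refine ⟨hxA, fun t ht htx => ?_⟩
    have hle : ⟪w, t • x⟫ ≤ M := inner_le_of_mem_convexHull htx (fun a ha => by
      rw [real_inner_comm]; exact hub a ha)
    rw [real_inner_smul_right, hxM] at hle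
    nlinarith
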